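/- arXiv:1905.00278 — 2 statements merged into one kernel-verified Lean document; each statement's English description precedes it below -/
import Mathlib

section
/- The theory ACF of algebraically closed fields is model-complete: if K ⊆ L are algebraically closed fields, then K is an elementary substructure of L. -/
open FirstOrder FirstOrder.Field Language Ring Cardinal

universe u

namespace ACFMC

variable {K : Type u} [Field K]

/-- Lift a ring formula with parameters from `K` to a sentence of `ring[[K]]`. -/
noncomputable def withParams {n : ℕ} (φ : Language.ring.Formula (Fin n)) (v : Fin n → K) :
    (Language.ring[[K]]).Sentence :=
  ((lhomWithConstants Language.ring K).onFormula φ).subst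
    (fun i => ((Language.ring.con (v i)).term))

theorem realize_withParams {M : Type*} [Language.ring.Structure M]
    [(Language.ring[[K]]).Structure M]
    [(lhomWithConstants Language.ring K).IsExpansionOn M]
    {n : ℕ} (φ : Language.ring.Formula (Fin n)) (v : Fin n → K) :
    M ⊨ withParams φ v ↔
      φ.Realize (fun i => ((Language.ring.con (v i) : (Language.ring[[K]]).Constants) : M)) := by
  rw [withParams, Sentence.Realize]
  show BoundedFormula.Realize _ _ _ ↔ _
  rw [BoundedFormula.realize_subst]
  show Formula.Realize _ _ ↔ _
  rw [LHom.realize_onFormula]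
  simp only [Term.realize_constants]


/-- The formula saying `x₀ + x₁ = x₂`. -/
noncomputable def addForm : Language.ring.Formula (Fin 3) :=
  Term.equal (Term.var 0 + Term.var 1) (Term.var 2)

/-- The formula saying `x₀ * x₁ = x₂`. -/
noncomputable def mulForm : Language.ring.Formula (Fin 3) :=
  Term.equal (Term.var 0 * Term.var 1) (Term.var 2)

/-- The formula saying `x₀ = 1`. -/
noncomputable def oneForm : Language.ring.Formula (Fin 1) :=
  Term.equal (Term.var 0) 1

/-- The quantifier-free diagram of `K`. -/
noncomputable def diag (K : Type u) [Field K] : (Language.ring[[K]]).Theory :=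
  (Set.range fun ab : K × K => withParams addForm ![ab.1, ab.2, ab.1 + ab.2]) ∪
  (Set.range fun ab : K × K => withParams mulForm ![ab.1, ab.2, ab.1 * ab.2]) ∪
  {withParams oneForm ![1]}

/-- `ACF p` together with the diagram of `K`. -/
noncomputable def Th (K : Type u) [Field K] (p : ℕ) : (Language.ring[[K]]).Theory :=
  (lhomWithConstants Language.ring K).onTheory (Theory.ACF p) ∪ diag K

section

variable {M : Type*} [Field M] [Add M] [CompatibleRing M]
  [(Language.ring[[K]]).Structure M]
  [(lhomWithConstants Language.ring K).IsExpansionOn M]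

/-- The interpretation of the constants. -/
def conMap (K : Type u) [Field K] (M : Type*) [(Language.ring[[K]]).Structure M] : K → M :=
  fun a => ((Language.ring.con a : (Language.ring[[K]]).Constants) : M)

theorem ringHomOfDiag {M : Type*} [Field M] [CompatibleRing M]
    [(Language.ring[[K]]).Structure M]
    [(lhomWithConstants Language.ring K).IsExpansionOn M]
    (h : M ⊨ diag K) :
    ∃ f : K →+* M, ⇑f = conMap K M := by
  have hadd : ∀ a b : K, conMap K M (a + b) = conMap K M a + conMap K M b := by
    intro a b
    have := h.realize_of_mem (φ := withParams addForm ![a, b, a + b])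
      (Or.inl (Or.inl ⟨(a, b), rfl⟩))
    rw [realize_withParams] at this
    simp only [addForm, Formula.realize_equal, realize_add, Term.realize_var] at this
    simpa [conMap] using this.symm
  have hmul : ∀ a b : K, conMap K M (a * b) = conMap K M a * conMap K M b := by
    intro a b
    have := h.realize_of_mem (φ := withParams mulForm ![a, b, a * b])
      (Or.inl (Or.inr ⟨(a, b), rfl⟩))
    rw [realize_withParams] at this
    simp only [mulForm, Formula.realize_equal, realize_mul, Term.realize_var] at this
    simpa [conMap] using this.symm
  have hone : conMap K M 1 = 1 := by
    have := h.realize_of_mem (φ := withParams oneForm ![1]) (Or.inr rfl)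
    rw [realize_withParams] at this
    simp only [oneForm, Formula.realize_equal, realize_one, Term.realize_var] at this
    simpa [conMap] using this
  refine ⟨RingHom.mk' ⟨⟨conMap K M, hone⟩, hmul⟩ hadd, rfl⟩

end


section AlgebraIso

open Cardinal

theorem card_transcendence_basis_eq (F M : Type u) [Field F] [Field M] [IsAlgClosed M]
    [Algebra F M] {s : Set M} (hs : IsTranscendenceBasis F ((↑) : s → M))
    (h : max #F ℵ₀ < #M) : #s = #M := by
  refine le_antisymm (mk_set_le s) (le_of_not_gt fun hlt => absurd
    (IsAlgClosed.cardinal_le_max_transcendence_basis _ hs) (not_le_of_gt ?_))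
  simp only [Cardinal.lift_id]
  refine max_lt (max_lt ?_ hlt) ?_
  · exact lt_of_le_of_lt (le_max_left _ _) h
  · exact lt_of_le_of_lt (le_max_right _ _) h

theorem exists_algEquiv_of_card_eq (F M N : Type u) [Field F] [Field M] [Field N]
    [IsAlgClosed M] [IsAlgClosed N] [Algebra F M] [Algebra F N]
    (h : max #F ℵ₀ < #M) (hMN : #M = #N) :
    ∃ e : M ≃+* N, ∀ a : F, e (algebraMap F M a) = algebraMap F N a := by
  obtain ⟨s, hs⟩ := exists_isTranscendenceBasis F M
  obtain ⟨t, ht⟩ := exists_isTranscendenceBasis F N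
  have hst : #s = #t := by
    rw [card_transcendence_basis_eq F M hs h, card_transcendence_basis_eq F N ht (hMN ▸ h),
      hMN]
  obtain ⟨e⟩ := Cardinal.eq.1 hst
  letI := IsAlgClosed.isAlgClosure_of_transcendence_basis _ hs
  letI := IsAlgClosed.isAlgClosure_of_transcendence_basis _ ht
  let e' : Algebra.adjoin F (Set.range ((↑) : s → M)) ≃ₐ[F]
      Algebra.adjoin F (Set.range ((↑) : t → N)) :=
    (hs.1.aevalEquiv.symm.trans (MvPolynomial.renameEquiv F e)).trans ht.1.aevalEquiv
  refine ⟨IsAlgClosure.equivOfEquiv M N e'.toRingEquiv, fun a => ?_⟩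
  rw [IsScalarTower.algebraMap_apply F (Algebra.adjoin F (Set.range ((↑) : s → M))) M a,
    IsAlgClosure.equivOfEquiv_algebraMap]
  show algebraMap _ N (e' (algebraMap F _ a)) = _
  rw [AlgEquiv.commutes, ← IsScalarTower.algebraMap_apply]

end AlgebraIso


section Categorical

open Cardinal

theorem Th_categorical (K : Type u) [Field K] (p : ℕ) (κ : Cardinal.{u})
    (hκ : max #K ℵ₀ < κ) : Categorical κ (Th K p) := by
  rintro ⟨M⟩ ⟨N⟩ hM hN
  letI := (lhomWithConstants Language.ring K).reduct M
  letI := (lhomWithConstants Language.ring K).reduct N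
  haveI := LHom.isExpansionOn_reduct (lhomWithConstants Language.ring K) M
  haveI := LHom.isExpansionOn_reduct (lhomWithConstants Language.ring K) N
  haveI : M ⊨ Theory.ACF p := (LHom.onTheory_model (lhomWithConstants Language.ring K) (Theory.ACF p)).1
    (Theory.Model.mono (inferInstance : (Th K p).Model _) Set.subset_union_left)
  haveI : N ⊨ Theory.ACF p := (LHom.onTheory_model (lhomWithConstants Language.ring K) (Theory.ACF p)).1
    (Theory.Model.mono (inferInstance : (Th K p).Model _) Set.subset_union_left)
  have hMdiag : M ⊨ diag K := Theory.Model.mono (inferInstance : (Th K p).Model _) Set.subset_union_right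
  have hNdiag : N ⊨ diag K := Theory.Model.mono (inferInstance : (Th K p).Model _) Set.subset_union_right
  letI := fieldOfModelACF p M
  haveI := modelField_of_modelACF p M
  letI := compatibleRingOfModelField M
  haveI := isAlgClosed_of_model_ACF p M
  letI := fieldOfModelACF p N
  haveI := modelField_of_modelACF p N
  letI := compatibleRingOfModelField N
  haveI := isAlgClosed_of_model_ACF p N
  obtain ⟨fM, hfM⟩ := ringHomOfDiag hMdiag
  obtain ⟨fN, hfN⟩ := ringHomOfDiag hNdiag
  letI : Algebra K M := fM.toAlgebra
  letI : Algebra K N := fN.toAlgebra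
  obtain ⟨e, he⟩ := exists_algEquiv_of_card_eq K M N (hM ▸ hκ) (hM.trans hN.symm)
  have hcon : ∀ a : K, e (conMap K M a) = conMap K N a := by
    intro a
    have := he a
    rwa [show algebraMap K M a = conMap K M a from congrFun hfM a,
      show algebraMap K N a = conMap K N a from congrFun hfN a] at this
  constructor
  refine ⟨e.toEquiv, ?_, ?_⟩
  · intro n f x
    match n, f with
    | 2, Sum.inl ringFunc.add =>
      show e (Structure.funMap (L := Language.ring) (addFunc : Language.ring.Functions 2) x)
          = Structure.funMap (L := Language.ring) (addFunc : Language.ring.Functions 2)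
            (fun i => e.toEquiv (x i))
      rw [CompatibleRing.funMap_add, CompatibleRing.funMap_add]
      simp [map_add]
    | 2, Sum.inl ringFunc.mul =>
      show e (Structure.funMap (L := Language.ring) (mulFunc : Language.ring.Functions 2) x)
          = Structure.funMap (L := Language.ring) (mulFunc : Language.ring.Functions 2)
            (fun i => e.toEquiv (x i))
      rw [CompatibleRing.funMap_mul, CompatibleRing.funMap_mul]
      simp [map_mul]
    | 1, Sum.inl ringFunc.neg =>
      show e (Structure.funMap (L := Language.ring) (negFunc : Language.ring.Functions 1) x)
          = Structure.funMap (L := Language.ring) (negFunc : Language.ring.Functions 1)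
            (fun i => e.toEquiv (x i))
      rw [CompatibleRing.funMap_neg, CompatibleRing.funMap_neg]
      simp [map_neg]
    | 0, Sum.inl ringFunc.zero =>
      show e (Structure.funMap (L := Language.ring) (zeroFunc : Language.ring.Functions 0) x)
          = Structure.funMap (L := Language.ring) (zeroFunc : Language.ring.Functions 0)
            (fun i => e.toEquiv (x i))
      rw [CompatibleRing.funMap_zero, CompatibleRing.funMap_zero]
      simp [map_zero]
    | 0, Sum.inl ringFunc.one =>
      show e (Structure.funMap (L := Language.ring) (oneFunc : Language.ring.Functions 0) x)
          = Structure.funMap (L := Language.ring) (oneFunc : Language.ring.Functions 0)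
            (fun i => e.toEquiv (x i))
      rw [CompatibleRing.funMap_one, CompatibleRing.funMap_one]
      simp [map_one]
    | 0, Sum.inr a =>
      refine (congrArg e (congrArg _ (Subsingleton.elim x default))).trans
        ((hcon a).trans (congrArg _ (Subsingleton.elim default _)))
    | (n + 1), Sum.inr f => exact isEmptyElim f
  · intro n r x
    match n, r with
    | _, Sum.inl r => exact isEmptyElim r
    | _, Sum.inr r => exact isEmptyElim r

end Categorical

theorem model_diag_of_ringHom {M : Type*} [Field M] [CompatibleRing M]
    [(Language.ring[[K]]).Structure M]
    [(lhomWithConstants Language.ring K).IsExpansionOn M]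
    (f : K →+* M) (hf : ⇑f = conMap K M) : M ⊨ diag K := by
  rw [Theory.model_iff]
  rintro φ ((⟨⟨a, b⟩, rfl⟩ | ⟨⟨a, b⟩, rfl⟩) | rfl)
  · rw [realize_withParams]
    simp only [addForm, Formula.realize_equal, realize_add, Term.realize_var]
    show conMap K M a + conMap K M b = conMap K M (a + b)
    rw [← hf, ← map_add]
  · rw [realize_withParams]
    simp only [mulForm, Formula.realize_equal, realize_mul, Term.realize_var]
    show conMap K M a * conMap K M b = conMap K M (a * b)
    rw [← hf, ← map_mul]
  · rw [realize_withParams]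
    simp only [oneForm, Formula.realize_equal, realize_one, Term.realize_var]
    show conMap K M 1 = 1
    rw [← hf, map_one]

theorem Th_isComplete (K : Type u) [Field K] (p : ℕ) [CharP K p] :
    (Th K p).IsComplete := by
  have hcard : (Language.ring[[K]]).card ≤ max #K ℵ₀ := by
    rw [card_withConstants, card_ring]
    refine Cardinal.add_le_of_le (le_max_right _ _) ?_ ?_
    · exact le_trans (by simpa using (Cardinal.nat_lt_aleph0 5).le) (le_max_right _ _)
    · simpa using le_max_left _ _
  refine Categorical.isComplete.{u, 0, u} (Order.succ (max #K ℵ₀)) _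
    (Th_categorical K p _ (Order.lt_succ _)) ?_ ?_ ?_ ?_
  · exact le_of_lt (lt_of_le_of_lt (le_max_right _ _) (Order.lt_succ _))
  · simp only [Cardinal.lift_id]
    exact le_of_lt (lt_of_le_of_lt hcard (Order.lt_succ _))
  · letI := compatibleRingOfRing (AlgebraicClosure K)
    letI : (constantsOn K).Structure (AlgebraicClosure K) :=
      constantsOn.structure (algebraMap K (AlgebraicClosure K))
    haveI : CharP (AlgebraicClosure K) p :=
      charP_of_injective_algebraMap (algebraMap K (AlgebraicClosure K)).injective p
    haveI : (Th K p).Model (AlgebraicClosure K) := by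
      refine Theory.model_union_iff.2 ⟨?_, ?_⟩
      · exact (LHom.onTheory_model _ _).2 inferInstance
      · exact model_diag_of_ringHom (algebraMap K (AlgebraicClosure K)) rfl
    exact ⟨⟨AlgebraicClosure K⟩⟩
  · rintro ⟨M⟩
    letI := (lhomWithConstants Language.ring K).reduct M
    haveI := LHom.isExpansionOn_reduct (lhomWithConstants Language.ring K) M
    haveI : M ⊨ Theory.ACF p := (LHom.onTheory_model (lhomWithConstants Language.ring K)
      (Theory.ACF p)).1 (Theory.Model.mono (inferInstance : (Th K p).Model _)
        Set.subset_union_left)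
    letI := fieldOfModelACF p M
    haveI := modelField_of_modelACF p M
    letI := compatibleRingOfModelField M
    haveI := isAlgClosed_of_model_ACF p M
    infer_instance

end ACFMC

/-- ACF is model-complete: if `K ⊆ L` are algebraically closed fields, then `K` is an
elementary substructure of `L` in the language of rings. -/
theorem ACF_model_complete {L : Type u} [Field L] [IsAlgClosed L] [CompatibleRing L]
    (K : Subfield L) [IsAlgClosed K] {n : ℕ}
    (φ : Language.ring.Formula (Fin n)) (v : Fin n → K) :
    letI := compatibleRingOfRing K
    (φ.Realize v ↔ φ.Realize (fun i => (v i : L))) := by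
  letI := compatibleRingOfRing K
  set p := ringChar K with hp
  haveI : CharP K p := ringChar.charP K
  haveI : CharP L p := charP_of_injective_ringHom (K.subtype : K →+* L).injective p
  letI : (constantsOn K).Structure K := constantsOn.structure id
  letI : (constantsOn K).Structure L := constantsOn.structure ((↑) : K → L)
  haveI : (ACFMC.Th (K : Type u) p).Model K := by
    refine Theory.model_union_iff.2 ⟨?_, ?_⟩
    · exact (LHom.onTheory_model _ _).2 inferInstance
    · exact ACFMC.model_diag_of_ringHom (RingHom.id K) rfl
  haveI : (ACFMC.Th (K : Type u) p).Model L := by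
    refine Theory.model_union_iff.2 ⟨?_, ?_⟩
    · exact (LHom.onTheory_model _ _).2 inferInstance
    · exact ACFMC.model_diag_of_ringHom K.subtype rfl
  have hC := ACFMC.Th_isComplete (K : Type u) p
  have h1 := hC.realize_sentence_iff (ACFMC.withParams φ v) K
  have h2 := hC.realize_sentence_iff (ACFMC.withParams φ v) L
  have h3 := h1.trans h2.symm
  rw [ACFMC.realize_withParams, ACFMC.realize_withParams] at h3
  exact h3
end

section
/- (Weak Nullstellensatz) Let F be an algebraically closed field and I a proper ideal of F[x₁,...,xₙ]. Then V(I) ≠ ∅, i.e., there exists ā ∈ Fⁿ such that f(ā) = 0 for all f ∈ I. -/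
/-- Hilbert's weak Nullstellensatz: a proper ideal of the polynomial ring over an
algebraically closed field has a common zero. -/
theorem weak_nullstellensatz {F : Type*} [Field F] [IsAlgClosed F] {n : ℕ}
    (I : Ideal (MvPolynomial (Fin n) F)) (hI : I ≠ ⊤) :
    ∃ a : Fin n → F, ∀ f ∈ I, MvPolynomial.eval a f = 0 := by
  by_contra h
  push_neg at h
  have hempty : MvPolynomial.zeroLocus F I = ∅ := by
    ext a
    simp only [MvPolynomial.mem_zeroLocus_iff, Set.mem_empty_iff_false, iff_false]
    push_neg
    simpa [MvPolynomial.coe_aeval_eq_eval] using h a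
  have hrad : I.radical = ⊤ := by
    rw [← MvPolynomial.vanishingIdeal_zeroLocus_eq_radical (K := F), hempty]
    ext f
    simp [MvPolynomial.mem_vanishingIdeal_iff]
  have : (1 : MvPolynomial (Fin n) F) ∈ I := by
    have h1 : (1 : MvPolynomial (Fin n) F) ∈ I.radical := hrad ▸ trivial
    obtain ⟨m, hm⟩ := h1
    simpa using hm
  exact hI (Ideal.eq_top_of_isUnit_mem I this isUnit_one)
end
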